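/- arXiv:2201.01916 — 3 statements merged into one kernel-verified Lean document; each statement's English description precedes it below -/
import Mathlib

section
/- With Q_N as defined, if f is itself a trigonometric polynomial with frequencies in F_N = {ξ ∈ ℤ^d : −N/2 ≤ ξ_m < N/2}, i.e. f ∈ S_N, then Q_N f = f (Q_N is a projection onto S_N). -/
open Real MeasureTheory Filter Finset

noncomputable section

/-- The open unit cube `Y = (0,1)^d`. -/
def cube (d : ℕ) : Set (Fin d → ℝ) := {x | ∀ m, x m ∈ Set.Ioo (0 : ℝ) 1}

/-- The subcube `Y_I` of side `1/N` indexed by `I ∈ {0,…,N-1}^d`. -/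
def cell (d N : ℕ) (I : Fin d → Fin N) : Set (Fin d → ℝ) :=
  {x | ∀ m, (I m : ℝ) / N ≤ x m ∧ x m < ((I m : ℝ) + 1) / N}

/-- The cell average `f*[I] = ⨍_{Y_I} f`. -/
def cellAvg (d N : ℕ) (f : (Fin d → ℝ) → ℂ) (I : Fin d → Fin N) : ℂ :=
  (N : ℂ) ^ d * ∫ x in cell d N I, f x

/-- Identification of `j ∈ {0,…,N-1}` with a frequency in `[-N/2, N/2)`. -/
def freq (N : ℕ) (j : Fin N) : ℤ := if 2 * (j : ℕ) < N then (j : ℤ) else (j : ℤ) - N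

/-- `e(z) = exp(2πi z)`. -/
def ee (z : ℂ) : ℂ := Complex.exp (2 * π * Complex.I * z)

/-- The DFT of the cell averages of `f`:
`f̂*[ξ] = N^{-d} Σ_I f*[I] e^{-2πi I·ξ/N}`. -/
def dftAvg (d N : ℕ) (f : (Fin d → ℝ) → ℂ) (ξ : Fin d → ℤ) : ℂ :=
  ((N : ℂ) ^ d)⁻¹ * ∑ I : Fin d → Fin N, cellAvg d N f I *
    ee (-(∑ m, (I m : ℂ) * (ξ m : ℂ)) / N)

/-- The box-filter Fourier symbol `Ĝ_N[ξ] = ∏_m N sin(πξ_m/N)/(πξ_m)`. -/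
def Ghat (d N : ℕ) (ξ : Fin d → ℤ) : ℝ :=
  ∏ m, if ξ m = 0 then 1 else (N : ℝ) * Real.sin (π * ξ m / N) / (π * ξ m)

/-- The `ξ`-th Fourier coefficient `f̂[ξ] = ∫_Y f(x) e^{-2πi ξ·x} dx`. -/
def fCoeff (d : ℕ) (f : (Fin d → ℝ) → ℂ) (ξ : Fin d → ℤ) : ℂ :=
  ∫ x in cube d, f x * ee (-(∑ m, (ξ m : ℂ) * (x m : ℂ)))

/-- The quasi-interpolation operator
`Q_N f = Σ_{ξ∈F_N} Ĝ_N[ξ]⁻¹ e^{-πi ξ·1/N} f̂*[ξ] e^{2πi ξ·x}`. -/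
def QN (d N : ℕ) (f : (Fin d → ℝ) → ℂ) (x : Fin d → ℝ) : ℂ :=
  ∑ j : Fin d → Fin N,
    ((Ghat d N (fun m => freq N (j m)) : ℂ)⁻¹ *
      Complex.exp (-(π * Complex.I) * (∑ m, (freq N (j m) : ℂ)) / N)) *
      dftAvg d N f (fun m => freq N (j m)) *
      ee (∑ m, (freq N (j m) : ℂ) * (x m : ℂ))

/-- The `L²`-orthogonal projection onto the span of the exponentials with
frequencies in `F_N` (Fourier truncation). -/
def PN (d N : ℕ) (f : (Fin d → ℝ) → ℂ) (x : Fin d → ℝ) : ℂ :=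
  ∑ j : Fin d → Fin N,
    fCoeff d f (fun m => freq N (j m)) * ee (∑ m, (freq N (j m) : ℂ) * (x m : ℂ))

/-- Weak convergence in `L²(Y;ℂ)` of a sequence `g_N` to `g_∞`,
formulated by testing against every `L²` function. -/
def WeakL2 (d : ℕ) (g : ℕ → (Fin d → ℝ) → ℂ) (glim : (Fin d → ℝ) → ℂ) : Prop :=
  ∀ v : (Fin d → ℝ) → ℂ, MemLp v 2 (volume.restrict (cube d)) →
    Tendsto (fun N => ∫ x in cube d, g N x * (starRingEnd ℂ) (v x)) atTop
      (nhds (∫ x in cube d, glim x * (starRingEnd ℂ) (v x)))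


lemma ee_add (a b : ℂ) : ee (a + b) = ee a * ee b := by
  rw [ee, ee, ee, mul_add, Complex.exp_add]

lemma ee_int (n : ℤ) : ee n = 1 := by
  rw [ee, show 2 * (π:ℂ) * Complex.I * n = n * (2 * π * Complex.I) by ring,
    Complex.exp_int_mul_two_pi_mul_I]

lemma ee_sum {ι : Type*} (s : Finset ι) (f : ι → ℂ) :
    ee (∑ m ∈ s, f m) = ∏ m ∈ s, ee (f m) := by
  rw [ee, mul_sum, Complex.exp_sum]; rfl

lemma ee_pow (z : ℂ) (n : ℕ) : ee z ^ n = ee (n * z) := by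
  rw [ee, ee, ← Complex.exp_nat_mul]; ring_nf

lemma ee_ne_one {k : ℤ} {N : ℕ} (hN : 0 < N) (h : ¬ (N:ℤ) ∣ k) : ee ((k:ℂ) / N) ≠ 1 := by
  intro hk
  rw [ee, Complex.exp_eq_one_iff] at hk
  obtain ⟨n, hn⟩ := hk
  apply h
  refine ⟨n, ?_⟩
  have hNne : (N:ℂ) ≠ 0 := Nat.cast_ne_zero.2 hN.ne'
  have hpi : (π:ℂ) ≠ 0 := Complex.ofReal_ne_zero.2 Real.pi_ne_zero
  have : (k:ℂ) = N * n := by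
    field_simp at hn
    have h2 : (2:ℂ) * π * Complex.I ≠ 0 := by
      simp [hpi, Complex.I_ne_zero]
    -- hn : 2 * π * I * (k/N) = n * (2 * π * I)
    have h3 : (k:ℂ) = (N:ℂ) * n := by
      apply mul_left_cancel₀ h2
      rw [hn]
    exact_mod_cast h3
  exact_mod_cast this

lemma geom_sum_ee (N : ℕ) (hN : 0 < N) (k : ℤ) :
    ∑ i : Fin N, ee ((i:ℂ) * k / N) = if (N:ℤ) ∣ k then (N:ℂ) else 0 := by
  have hNne : (N:ℂ) ≠ 0 := Nat.cast_ne_zero.2 hN.ne'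
  split_ifs with h
  · obtain ⟨m, rfl⟩ := h
    have key : ∀ i : Fin N, ee ((i:ℂ) * ((N:ℂ) * (m:ℂ)) / N) = 1 := by
      intro i
      have : ((i:ℂ) * ((N:ℂ)*(m:ℂ)) / N) = ((i * m : ℤ) : ℂ) := by push_cast; field_simp
      rw [this, ee_int]
    push_cast
    simp only [key]
    simp
  · have hr1 : ee ((k:ℂ)/N) ≠ 1 := ee_ne_one hN h
    have hterm : ∀ i : Fin N, ee ((i:ℂ) * k / N) = ee ((k:ℂ)/N) ^ (i:ℕ) := by
      intro i; rw [ee_pow]; ring_nf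
    simp_rw [hterm]
    rw [Fin.sum_univ_eq_sum_range (fun i => ee ((k:ℂ)/N) ^ i), geom_sum_eq hr1]
    rw [ee_pow]
    have : (N:ℂ) * ((k:ℂ)/N) = (k:ℤ) := by field_simp
    rw [this, ee_int, sub_self, zero_div]

lemma exp_sq_sub_one (w : ℂ) :
    Complex.exp (w * Complex.I) * Complex.exp (w * Complex.I) - 1 =
      Complex.exp (w * Complex.I) * (2 * Complex.I * Complex.sin w) := by
  have h : Complex.exp (w * Complex.I) * Complex.exp (-w * Complex.I) = 1 := by
    rw [← Complex.exp_add]; ring_nf; exact Complex.exp_zero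
  rw [Complex.sin]
  linear_combination (-(Complex.exp (w * Complex.I)) *
    (Complex.exp (-w * Complex.I) - Complex.exp (w * Complex.I))) * Complex.I_sq + h

lemma cell1 (N : ℕ) (hN : 0 < N) (ξ : ℤ) (I : Fin N) :
    (N:ℂ) * ∫ t in Set.Ico ((I:ℝ)/N) (((I:ℝ)+1)/N), ee ((ξ:ℂ) * t) =
      ((if ξ = 0 then 1 else (N:ℝ) * Real.sin (π * ξ / N) / (π * ξ)) : ℝ) *
        Complex.exp (π * Complex.I * ξ / N) * ee ((ξ:ℂ) * I / N) := by
  have hNR : (0:ℝ) < N := Nat.cast_pos.2 hN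
  have hNne : (N:ℝ) ≠ 0 := hNR.ne'
  have hNC : (N:ℂ) ≠ 0 := Nat.cast_ne_zero.2 hN.ne'
  have hab : (I:ℝ)/N ≤ ((I:ℝ)+1)/N := by gcongr; linarith
  have hIoc : ∫ t in Set.Ico ((I:ℝ)/N) (((I:ℝ)+1)/N), ee ((ξ:ℂ) * t) =
      ∫ t in (I:ℝ)/N..(((I:ℝ)+1)/N), ee ((ξ:ℂ) * t) := by
    rw [intervalIntegral.integral_of_le hab]
    exact setIntegral_congr_set Ico_ae_eq_Ioc
  rw [hIoc]
  by_cases hξ : ξ = 0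
  · subst hξ
    simp only [Int.cast_zero, zero_mul, mul_zero, zero_div, ee, Complex.exp_zero,
      if_true, Complex.ofReal_one, one_mul, mul_one]
    rw [intervalIntegral.integral_const]
    have : ((I:ℝ)+1)/N - (I:ℝ)/N = 1/N := by field_simp; ring
    rw [this]
    push_cast
    field_simp
    simp [Complex.real_smul, hNC]
  · set c : ℂ := 2 * π * Complex.I * ξ with hc_def
    have hπ : (π:ℂ) ≠ 0 := Complex.ofReal_ne_zero.2 Real.pi_ne_zero
    have hξC : (ξ:ℂ) ≠ 0 := Int.cast_ne_zero.2 hξ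
    have hc : c ≠ 0 := by
      simp only [hc_def]
      exact mul_ne_zero (mul_ne_zero (mul_ne_zero two_ne_zero hπ) Complex.I_ne_zero) hξC
    have hee : ∀ t : ℝ, ee ((ξ:ℂ) * t) = Complex.exp (c * t) := by
      intro t; rw [ee, hc_def]; ring_nf
    simp only [hee]
    rw [integral_exp_mul_complex hc]
    set u : ℂ := Complex.exp (π * Complex.I * ξ / N) with hu_def
    set E : ℂ := Complex.exp (c * ((I:ℝ)/N : ℝ)) with hE_def
    have hb : Complex.exp (c * (((I:ℝ)+1)/N : ℝ)) = E * (u * u) := by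
      rw [hE_def, hu_def, ← Complex.exp_add, ← Complex.exp_add]
      congr 1
      push_cast
      field_simp
      ring
    have hEe : E = ee ((ξ:ℂ) * I / N) := by
      rw [hE_def, ee]
      congr 1
      push_cast
      ring
    have husq : u * u - 1 = u * (2 * Complex.I * Complex.sin ((π:ℂ) * ξ / N)) := by
      have := exp_sq_sub_one ((π:ℂ) * ξ / N)
      rw [show ((π:ℂ) * ξ / N) * Complex.I = π * Complex.I * ξ / N by ring] at this
      rw [← hu_def] at this
      exact this
    rw [if_neg hξ, hb, ← hEe]
    push_cast
    field_simp
    linear_combination ((π:ℂ) * ξ * E) * husq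



lemma cell_eq_pi (d N : ℕ) (I : Fin d → Fin N) :
    cell d N I = Set.pi Set.univ (fun m => Set.Ico ((I m : ℝ)/N) (((I m:ℝ)+1)/N)) := by
  ext x; simp [cell, Set.mem_pi, Set.mem_Ico]

lemma indicator_pi {d : ℕ} (s : Fin d → Set ℝ) (f : Fin d → ℝ → ℂ) (x : Fin d → ℝ) :
    (Set.pi Set.univ s).indicator (fun x => ∏ m, f m (x m)) x =
      ∏ m, (s m).indicator (f m) (x m) := by
  by_cases hx : x ∈ Set.pi Set.univ s
  · rw [Set.indicator_of_mem hx]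
    exact Finset.prod_congr rfl fun m _ =>
      (Set.indicator_of_mem (hx m (Set.mem_univ m)) _).symm
  · rw [Set.indicator_of_notMem hx]
    simp only [Set.mem_pi, Set.mem_univ, forall_true_left, not_forall] at hx
    obtain ⟨m, hm⟩ := hx
    exact (Finset.prod_eq_zero (Finset.mem_univ m) (Set.indicator_of_notMem hm _)).symm

lemma integral_cell_prod (d N : ℕ) (I : Fin d → Fin N) (f : Fin d → ℝ → ℂ) :
    ∫ x in cell d N I, ∏ m, f m (x m) =
      ∏ m, ∫ t in Set.Ico ((I m:ℝ)/N) (((I m:ℝ)+1)/N), f m t := by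
  rw [cell_eq_pi, ← integral_indicator (MeasurableSet.univ_pi fun m => measurableSet_Ico)]
  simp_rw [indicator_pi]
  rw [MeasureTheory.integral_fintype_prod_volume_eq_prod (ι := Fin d)
    (fun m t => (Set.Ico ((I m:ℝ)/N) (((I m:ℝ)+1)/N)).indicator (f m) t)]
  exact Finset.prod_congr rfl fun m _ => (integral_indicator measurableSet_Ico)

lemma cellAvg_ee (d N : ℕ) (hN : 0 < N) (ξ : Fin d → ℤ) (I : Fin d → Fin N) :
    cellAvg d N (fun x => ee (∑ m, (ξ m : ℂ) * (x m : ℂ))) I =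
      (Ghat d N ξ : ℂ) * Complex.exp (π * Complex.I * (∑ m, (ξ m : ℂ)) / N) *
        ee ((∑ m, (I m : ℂ) * (ξ m : ℂ)) / N) := by
  rw [cellAvg]
  have h1 : ∀ x : Fin d → ℝ, ee (∑ m, (ξ m:ℂ) * (x m:ℂ)) =
      ∏ m, ee ((ξ m:ℂ) * ((x m : ℝ) : ℂ)) := fun x => ee_sum _ _
  simp_rw [h1]
  rw [integral_cell_prod d N I (fun m t => ee ((ξ m:ℂ) * ((t:ℝ):ℂ)))]
  rw [show (N:ℂ)^d = ∏ _m : Fin d, (N:ℂ) from by simp, ← Finset.prod_mul_distrib]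
  rw [Finset.prod_congr rfl (fun m _ => cell1 N hN (ξ m) (I m))]
  rw [Finset.prod_mul_distrib, Finset.prod_mul_distrib]
  congr 1
  · congr 1
    · rw [Ghat, Complex.ofReal_prod]
    · rw [← Complex.exp_sum]
      congr 1
      rw [div_eq_mul_inv, Finset.mul_sum, Finset.sum_mul]
      exact Finset.sum_congr rfl fun m _ => by ring
  · rw [← ee_sum]
    congr 1
    rw [Finset.sum_div]
    exact Finset.sum_congr rfl fun m _ => by ring


lemma sum_ee_cells (d N : ℕ) (hN : 0 < N) (ζ ξ : Fin d → ℤ) :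
    ∑ I : Fin d → Fin N,
        ee ((∑ m, (I m:ℂ) * (ζ m:ℂ))/N) * ee (-(∑ m, (I m:ℂ) * (ξ m:ℂ))/N) =
      if ∀ m, (N:ℤ) ∣ (ζ m - ξ m) then ((N:ℂ))^d else 0 := by
  have hterm : ∀ I : Fin d → Fin N,
      ee ((∑ m, (I m:ℂ) * (ζ m:ℂ))/N) * ee (-(∑ m, (I m:ℂ) * (ξ m:ℂ))/N) =
        ∏ m, ee ((I m:ℂ) * ((ζ m - ξ m : ℤ) : ℂ) / N) := by
    intro I
    rw [← ee_add, ← ee_sum]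
    congr 1
    rw [Finset.sum_congr rfl (fun m (_ : m ∈ Finset.univ) =>
      show (I m:ℂ) * ((ζ m - ξ m : ℤ):ℂ) / N =
        (I m:ℂ) * (ζ m:ℂ) / N - (I m:ℂ) * (ξ m:ℂ) / N by push_cast; ring),
      Finset.sum_sub_distrib, ← Finset.sum_div, ← Finset.sum_div]
    ring
  simp_rw [hterm]
  rw [← Fintype.piFinset_univ, ← Finset.prod_univ_sum (fun _ => (Finset.univ : Finset (Fin N)))
    (fun m (v : Fin N) => ee ((v:ℂ) * ((ζ m - ξ m : ℤ):ℂ)/N))]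
  have hfac : ∀ m : Fin d, ∑ i : Fin N, ee ((i:ℂ) * ((ζ m - ξ m : ℤ):ℂ) / N) =
      if (N:ℤ) ∣ (ζ m - ξ m) then (N:ℂ) else 0 := fun m => geom_sum_ee N hN _
  rw [Finset.prod_congr rfl fun m _ => hfac m]
  by_cases h : ∀ m, (N:ℤ) ∣ (ζ m - ξ m)
  · rw [if_pos h]
    rw [Finset.prod_congr rfl fun m _ => if_pos (h m)]
    simp
  · rw [if_neg h]
    push_neg at h
    obtain ⟨m, hm⟩ := h
    exact Finset.prod_eq_zero (Finset.mem_univ m) (if_neg hm)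

lemma dftAvg_ee (d N : ℕ) (hN : 0 < N) (ζ ξ : Fin d → ℤ) :
    dftAvg d N (fun x => ee (∑ m, (ζ m:ℂ) * (x m:ℂ))) ξ =
      if ∀ m, (N:ℤ) ∣ (ζ m - ξ m) then
        (Ghat d N ζ : ℂ) * Complex.exp (π * Complex.I * (∑ m, (ζ m:ℂ)) / N) else 0 := by
  have hNC : (N:ℂ) ≠ 0 := Nat.cast_ne_zero.2 hN.ne'
  rw [dftAvg]
  have h1 : ∀ I : Fin d → Fin N,
      cellAvg d N (fun x => ee (∑ m, (ζ m:ℂ) * (x m:ℂ))) I *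
          ee (-(∑ m, (I m : ℂ) * (ξ m : ℂ)) / N) =
        (Ghat d N ζ : ℂ) * Complex.exp (π * Complex.I * (∑ m, (ζ m:ℂ)) / N) *
          (ee ((∑ m, (I m:ℂ) * (ζ m:ℂ))/N) * ee (-(∑ m, (I m:ℂ) * (ξ m:ℂ))/N)) := by
    intro I
    rw [cellAvg_ee d N hN ζ I]
    ring
  rw [Finset.sum_congr rfl fun I _ => h1 I, ← Finset.mul_sum, sum_ee_cells d N hN ζ ξ]
  split_ifs with h
  · field_simp
  · simp

lemma freq_bound (N : ℕ) (j : Fin N) : -(N:ℤ) ≤ 2 * freq N j ∧ 2 * freq N j < N := by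
  have := j.isLt
  unfold freq
  split_ifs <;> omega

lemma freq_dvd_eq {N : ℕ} (hN : 0 < N) {a b : Fin N}
    (h : (N:ℤ) ∣ freq N a - freq N b) : a = b := by
  have ha := freq_bound N a
  have hb := freq_bound N b
  have h0 : freq N a - freq N b = 0 := by
    refine Int.eq_zero_of_abs_lt_dvd h ?_
    rw [abs_lt]
    omega
  have hlt := a.isLt
  have hlt' := b.isLt
  unfold freq at h0
  split_ifs at h0 <;> (apply Fin.ext; omega)

lemma Ghat_ne_zero (d N : ℕ) (hN : 0 < N) (j : Fin d → Fin N) :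
    Ghat d N (fun m => freq N (j m)) ≠ 0 := by
  rw [Ghat]
  apply Finset.prod_ne_zero_iff.2
  intro m _
  split_ifs with h
  · exact one_ne_zero
  · have hNR : (0:ℝ) < N := Nat.cast_pos.2 hN
    have hb := freq_bound N (j m)
    set k : ℤ := freq N (j m) with hk
    have hkN : -(N:ℤ) < k ∧ k < N := by omega
    have hsin : Real.sin (π * k / N) ≠ 0 := by
      have hlt : π * k / N < π := by
        rw [div_lt_iff₀ hNR]
        have : (k:ℝ) < N := by exact_mod_cast hkN.2
        nlinarith [Real.pi_pos]
      have hgt : -π < π * k / N := by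
        rw [lt_div_iff₀ hNR]
        have : -(N:ℝ) < k := by exact_mod_cast hkN.1
        nlinarith [Real.pi_pos]
      intro hs
      have h0 := (Real.sin_eq_zero_iff_of_lt_of_lt hgt hlt).1 hs
      have hk0 : (k:ℝ) = 0 := by
        rcases div_eq_zero_iff.1 h0 with h1 | h1
        · rcases mul_eq_zero.1 h1 with h2 | h2
          · exact absurd h2 Real.pi_ne_zero
          · exact h2
        · exact absurd h1 hNR.ne'
      exact (Int.cast_ne_zero.2 h) hk0
    intro hzero
    rcases div_eq_zero_iff.1 hzero with h1 | h1
    · rcases mul_eq_zero.1 h1 with h2 | h2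
      · exact hNR.ne' h2
      · exact hsin h2
    · exact mul_ne_zero Real.pi_ne_zero (Int.cast_ne_zero.2 h) h1


lemma integrableOn_ee (d N : ℕ) (ζ : Fin d → ℤ) (I : Fin d → Fin N) :
    IntegrableOn (fun x : Fin d → ℝ => ee (∑ m, (ζ m:ℂ) * (x m:ℂ))) (cell d N I) := by
  have hcont : Continuous fun x : Fin d → ℝ => ee (∑ m, (ζ m:ℂ) * (x m:ℂ)) := by
    have h1 : Continuous fun x : Fin d → ℝ => ∑ m, (ζ m:ℂ) * (x m:ℂ) :=
      continuous_finset_sum _ fun m _ =>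
        continuous_const.mul (Complex.continuous_ofReal.comp (continuous_apply m))
    exact Complex.continuous_exp.comp (continuous_const.mul h1)
  have hsub : cell d N I ⊆
      Set.Icc (fun m => (I m : ℝ)/N) (fun m => ((I m:ℝ)+1)/N) := by
    intro x hx
    rw [Set.mem_Icc]
    constructor <;> (intro m; rcases hx m with ⟨h1, h2⟩)
    · exact h1
    · exact le_of_lt h2
  exact ((hcont.continuousOn).integrableOn_compact isCompact_Icc).mono_set hsub

lemma dftAvg_linear (d N : ℕ) (hN : 0 < N) (c : (Fin d → Fin N) → ℂ)
    (ζ : (Fin d → Fin N) → Fin d → ℤ) (ξ : Fin d → ℤ) :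
    dftAvg d N (fun x => ∑ j : Fin d → Fin N, c j * ee (∑ m, (ζ j m:ℂ) * (x m:ℂ))) ξ =
      ∑ j : Fin d → Fin N, c j *
        dftAvg d N (fun x => ee (∑ m, (ζ j m:ℂ) * (x m:ℂ))) ξ := by
  have hAvg : ∀ I : Fin d → Fin N,
      cellAvg d N (fun x => ∑ j : Fin d → Fin N, c j * ee (∑ m, (ζ j m:ℂ) * (x m:ℂ))) I =
        ∑ j : Fin d → Fin N, c j *
          cellAvg d N (fun x => ee (∑ m, (ζ j m:ℂ) * (x m:ℂ))) I := by
    intro I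
    rw [cellAvg]
    rw [integral_finset_sum Finset.univ
      (fun j _ => ((integrableOn_ee d N (ζ j) I).const_mul (c j)))]
    rw [Finset.mul_sum]
    exact Finset.sum_congr rfl fun j _ => by
      rw [MeasureTheory.integral_const_mul, cellAvg]; ring
  rw [dftAvg]
  simp_rw [hAvg, Finset.sum_mul, Finset.mul_sum]
  rw [Finset.sum_comm]
  refine Finset.sum_congr rfl fun j _ => ?_
  rw [dftAvg, Finset.mul_sum, Finset.mul_sum]
  refine Finset.sum_congr rfl fun I _ => ?_
  ring

/-- `Q_N` is a projection: if `f` is a trigonometric polynomial with frequencies in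
`F_N`, i.e. `f ∈ S_N`, then `Q_N f = f`. -/
theorem QN_proj (d N : ℕ) (hN : 0 < N) (c : (Fin d → Fin N) → ℂ)
    (f : (Fin d → ℝ) → ℂ)
    (hf : ∀ x, f x = ∑ j : Fin d → Fin N,
      c j * ee (∑ m, (freq N (j m) : ℂ) * (x m : ℂ))) :
    ∀ x, QN d N f x = f x := by
  intro x
  have hNC : (N:ℂ) ≠ 0 := Nat.cast_ne_zero.2 hN.ne'
  have hfe : f = fun x => ∑ j : Fin d → Fin N,
      c j * ee (∑ m, (freq N (j m) : ℂ) * (x m : ℂ)) := funext hf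
  subst hfe
  rw [QN]
  have hdft : ∀ j : Fin d → Fin N,
      dftAvg d N (fun x => ∑ j' : Fin d → Fin N,
          c j' * ee (∑ m, (freq N (j' m) : ℂ) * (x m : ℂ))) (fun m => freq N (j m)) =
        c j * ((Ghat d N (fun m => freq N (j m)) : ℂ) *
          Complex.exp (π * Complex.I * (∑ m, (freq N (j m):ℂ)) / N)) := by
    intro j
    rw [dftAvg_linear d N hN c (fun j' m => freq N (j' m)) (fun m => freq N (j m))]
    have hterm : ∀ j' : Fin d → Fin N,
        c j' * dftAvg d N (fun x => ee (∑ m, (freq N (j' m):ℂ) * (x m:ℂ)))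
            (fun m => freq N (j m)) =
          if j' = j then c j' * ((Ghat d N (fun m => freq N (j' m)) : ℂ) *
            Complex.exp (π * Complex.I * (∑ m, (freq N (j' m):ℂ)) / N)) else 0 := by
      intro j'
      rw [dftAvg_ee d N hN (fun m => freq N (j' m)) (fun m => freq N (j m))]
      by_cases hjj : j' = j
      · subst hjj
        rw [if_pos rfl, if_pos (fun m => by simp)]
      · have hnot : ¬ ∀ m, (N:ℤ) ∣ (freq N (j' m) - freq N (j m)) := fun hall =>
          hjj (funext fun m => freq_dvd_eq hN (hall m))
        rw [if_neg hnot, if_neg hjj, mul_zero]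
    rw [Finset.sum_congr rfl fun j' _ => hterm j']
    rw [Finset.sum_ite_eq' Finset.univ j]
    rw [if_pos (Finset.mem_univ j)]
  rw [Finset.sum_congr rfl fun j (_ : j ∈ Finset.univ) => by rw [hdft j]]
  refine Finset.sum_congr rfl fun j _ => ?_
  have hG : ((Ghat d N (fun m => freq N (j m)) : ℝ) : ℂ) ≠ 0 :=
    Complex.ofReal_ne_zero.2 (Ghat_ne_zero d N hN j)
  have hexp : Complex.exp (-(π * Complex.I) * (∑ m, (freq N (j m):ℂ)) / N) *
      Complex.exp (π * Complex.I * (∑ m, (freq N (j m):ℂ)) / N) = 1 := by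
    rw [← Complex.exp_add]
    rw [show -(π * Complex.I) * (∑ m, (freq N (j m):ℂ)) / N +
        π * Complex.I * (∑ m, (freq N (j m):ℂ)) / N = 0 by ring]
    exact Complex.exp_zero
  have hGinv : ((Ghat d N (fun m => freq N (j m)) : ℝ) : ℂ) *
      ((Ghat d N (fun m => freq N (j m)) : ℝ) : ℂ)⁻¹ = 1 := mul_inv_cancel₀ hG
  linear_combination (c j * ee (∑ m, (freq N (j m):ℂ) * (x m:ℂ)) *
      ((Ghat d N (fun m => freq N (j m)) : ℝ) : ℂ)⁻¹ *
      ((Ghat d N (fun m => freq N (j m)) : ℝ) : ℂ)) * hexp +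
    (c j * ee (∑ m, (freq N (j m):ℂ) * (x m:ℂ))) * hGinv

end
end

section
/- Let f_N ⇀ f_∞ weakly in L²(Y;ℂ). Then for every fixed ξ' ∈ ℤ^d, the ξ'-th coefficient of the DFT of the cell averages of f_N converges to the ξ'-th Fourier coefficient of f_∞; i.e. with f_N*[I] = ⨍_{Y_I} f_N and f̂_N*[ξ'] = N^{−d} Σ_I f_N*[I] e^{−2πi I·ξ'/N}, one has f̂_N*[ξ'] → f̂_∞[ξ'] as N → ∞. -/
open Real MeasureTheory Filter Finset

noncomputable section

/-! ### Auxiliary material -/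

lemma ee_real_aux (t : ℝ) : ee (t : ℂ) = circleMap 0 1 (2 * π * t) := by
  simp only [ee, circleMap, zero_add, one_mul]
  ring_nf
  push_cast
  ring_nf

lemma ee_lip_aux (s t : ℝ) : ‖ee (s : ℂ) - ee (t : ℂ)‖ ≤ 2 * π * |s - t| := by
  rw [ee_real_aux, ee_real_aux]
  calc ‖circleMap 0 1 (2 * π * s) - circleMap 0 1 (2 * π * t)‖
      = dist (circleMap 0 1 (2 * π * s)) (circleMap 0 1 (2 * π * t)) := (dist_eq_norm _ _).symm
    _ ≤ (Real.nnabs 1 : ℝ) * dist (2 * π * s) (2 * π * t) :=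
        (lipschitzWith_circleMap 0 1).dist_le_mul _ _
    _ = |2 * π * s - 2 * π * t| := by
        rw [Real.dist_eq]; simp
    _ = 2 * π * |s - t| := by
        rw [← mul_sub, abs_mul, abs_of_nonneg (by positivity : (0:ℝ) ≤ 2 * π)]

lemma ee_norm_aux (t : ℝ) : ‖ee (t : ℂ)‖ = 1 := by
  simp only [ee]
  rw [Complex.norm_exp]
  norm_num [Complex.mul_re, Complex.mul_im]

/-- The half-open unit box `[0,1)^d`. -/
def boxAux (d : ℕ) : Set (Fin d → ℝ) := {x | ∀ m, x m ∈ Set.Ico (0 : ℝ) 1}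

lemma volume_cube_aux (d : ℕ) : volume (cube d) = 1 := by
  have : cube d = Set.univ.pi fun _ : Fin d => Set.Ioo (0:ℝ) 1 := by
    ext x; simp [cube, Set.mem_pi]
  rw [this, volume_pi_pi]; simp

lemma cube_ae_box_aux (d : ℕ) : cube d =ᵐ[volume] boxAux d := by
  rw [MeasureTheory.ae_eq_set]
  constructor
  · have : cube d \ boxAux d = ∅ := by
      ext x
      simp only [Set.mem_diff, Set.mem_empty_iff_false, iff_false, not_and, not_not]
      intro hx m; exact ⟨(hx m).1.le, (hx m).2⟩
    simp [this]
  · refine measure_mono_null (fun x hx => ?_) (measure_iUnion_null (fun m : Fin d =>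
      (?_ : volume {y : Fin d → ℝ | y m = 0} = 0)))
    · obtain ⟨hb, hc⟩ := hx
      simp only [cube, Set.mem_setOf_eq, not_forall] at hc
      obtain ⟨m, hm⟩ := hc
      refine Set.mem_iUnion.2 ⟨m, ?_⟩
      have h0 := (hb m).1
      have h1 := (hb m).2
      simp only [Set.mem_setOf_eq]
      rcases lt_or_eq_of_le h0 with h | h
      · exact absurd ⟨h, h1⟩ hm
      · exact h.symm
    · rw [MeasureTheory.volume_pi]
      exact MeasureTheory.Measure.pi_hyperplane _ m 0

lemma cell_measurableSet_aux (d N : ℕ) (I : Fin d → Fin N) : MeasurableSet (cell d N I) := by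
  have : cell d N I = Set.univ.pi fun m => Set.Ico ((I m : ℝ)/N) (((I m : ℝ)+1)/N) := by
    ext x; simp [cell, Set.mem_pi, Set.mem_Ico]
  rw [this]; exact MeasurableSet.univ_pi fun m => measurableSet_Ico

lemma floor_mem_cell_aux {d N : ℕ} {I : Fin d → Fin N} {x : Fin d → ℝ} (hx : x ∈ cell d N I)
    (m : Fin d) : ⌊(N : ℝ) * x m⌋ = (I m : ℤ) := by
  have hN : (0:ℝ) < N := by exact_mod_cast (I m).pos
  obtain ⟨h1, h2⟩ := hx m
  rw [Int.floor_eq_iff]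
  constructor
  · push_cast
    rw [div_le_iff₀ hN] at h1; linarith [h1]
  · push_cast
    rw [lt_div_iff₀ hN] at h2; linarith [h2]

lemma cell_disjoint_aux {d N : ℕ} : Pairwise (Function.onFun Disjoint (cell d N)) := by
  intro I J hIJ
  rw [Function.onFun, Set.disjoint_left]
  intro x hI hJ
  apply hIJ
  funext m
  have h1 := floor_mem_cell_aux hI m
  have h2 := floor_mem_cell_aux hJ m
  have h3 : (I m : ℤ) = (J m : ℤ) := h1 ▸ h2 ▸ rfl
  exact Fin.ext (by exact_mod_cast h3)

lemma iUnion_cell_aux (d N : ℕ) (hN : 0 < N) :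
    (⋃ I : Fin d → Fin N, cell d N I) = boxAux d := by
  ext x
  simp only [Set.mem_iUnion]
  constructor
  · rintro ⟨I, hI⟩ m
    have hNR : (0:ℝ) < N := by exact_mod_cast hN
    refine ⟨le_trans (by positivity) (hI m).1, lt_of_lt_of_le (hI m).2 ?_⟩
    rw [div_le_one hNR]
    have : (I m : ℝ) + 1 ≤ N := by exact_mod_cast (I m).2
    exact this
  · intro hx
    have hNR : (0:ℝ) < N := by exact_mod_cast hN
    have hfl : ∀ m, 0 ≤ ⌊(N:ℝ) * x m⌋ ∧ ⌊(N:ℝ) * x m⌋ < N := by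
      intro m
      constructor
      · exact Int.floor_nonneg.2 (by nlinarith [(hx m).1])
      · rw [Int.floor_lt]; push_cast; nlinarith [(hx m).2]
    have hlt : ∀ m, (⌊(N:ℝ) * x m⌋).toNat < N := by
      intro m; have h := (hfl m).2; omega
    refine ⟨fun m => ⟨(⌊(N:ℝ) * x m⌋).toNat, hlt m⟩, fun m => ⟨?_, ?_⟩⟩ <;>
      simp only [] <;>
      rw [show ((((⌊(N:ℝ) * x m⌋).toNat : ℕ)) : ℝ) = ((⌊(N:ℝ) * x m⌋ : ℤ) : ℝ) by
        exact_mod_cast congrArg (Int.cast : ℤ → ℝ) (Int.toNat_of_nonneg (hfl m).1)]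
    · rw [div_le_iff₀ hNR]
      calc ((⌊(N:ℝ) * x m⌋ : ℤ) : ℝ) ≤ (N:ℝ) * x m := Int.floor_le _
        _ = x m * N := by ring
    · rw [lt_div_iff₀ hNR]
      calc x m * N = (N:ℝ) * x m := by ring
        _ < ⌊(N:ℝ) * x m⌋ + 1 := Int.lt_floor_add_one _

/-- The piecewise-constant phase `-(Σ_m ⌊N x_m⌋ ξ'_m)/N`. -/
def gphase (d N : ℕ) (ξ' : Fin d → ℤ) (x : Fin d → ℝ) : ℝ :=
  -(∑ m, (⌊(N : ℝ) * x m⌋ : ℝ) * (ξ' m : ℝ)) / N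

/-- The continuous phase `-Σ_m ξ'_m x_m`. -/
def ephase (d : ℕ) (ξ' : Fin d → ℤ) (x : Fin d → ℝ) : ℝ :=
  -(∑ m, (ξ' m : ℝ) * x m)

lemma gphase_measurable (d N : ℕ) (ξ' : Fin d → ℤ) : Measurable (gphase d N ξ') := by
  apply Measurable.div_const
  apply Measurable.neg
  apply Finset.measurable_sum
  intro m _
  exact (((Measurable.of_discrete (f := (Int.cast : ℤ → ℝ))).comp
    (Int.measurable_floor.comp ((measurable_pi_apply m).const_mul _))).mul_const _)

lemma ephase_continuous (d : ℕ) (ξ' : Fin d → ℤ) : Continuous (ephase d ξ') := by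
  unfold ephase
  exact (continuous_finset_sum _ fun m _ =>
    (continuous_const.mul (continuous_apply m))).neg

lemma phase_diff (d N : ℕ) (hN : 0 < N) (ξ' : Fin d → ℤ) (x : Fin d → ℝ) :
    |gphase d N ξ' x - ephase d ξ' x| ≤ (∑ m, |(ξ' m : ℝ)|) / N := by
  have hNR : (0:ℝ) < N := by exact_mod_cast hN
  have key : gphase d N ξ' x - ephase d ξ' x
      = ∑ m, (ξ' m : ℝ) * (((N:ℝ) * x m - ⌊(N:ℝ) * x m⌋) / N) := by
    unfold gphase ephase
    have h1 : ∀ m : Fin d, (ξ' m : ℝ) * (((N:ℝ) * x m - ⌊(N:ℝ) * x m⌋) / N)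
        = (ξ' m : ℝ) * x m - (⌊(N:ℝ) * x m⌋ : ℝ) * (ξ' m : ℝ) / N := by
      intro m
      have hne : (N:ℝ) ≠ 0 := ne_of_gt hNR
      field_simp
    rw [Finset.sum_congr rfl (fun m _ => h1 m), Finset.sum_sub_distrib, neg_div,
      Finset.sum_div]
    ring
  rw [key, Finset.sum_div]
  refine le_trans (Finset.abs_sum_le_sum_abs _ _) (Finset.sum_le_sum fun m _ => ?_)
  rw [abs_mul]
  have h0 : 0 ≤ ((N:ℝ) * x m - ⌊(N:ℝ) * x m⌋) / N :=
    div_nonneg (by linarith [Int.floor_le ((N:ℝ) * x m)]) hNR.le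
  rw [abs_of_nonneg h0]
  calc |(ξ' m : ℝ)| * (((N:ℝ) * x m - ⌊(N:ℝ) * x m⌋) / N)
      ≤ |(ξ' m : ℝ)| * (1 / N) := by
        refine mul_le_mul_of_nonneg_left ?_ (abs_nonneg _)
        gcongr
        linarith [Int.lt_floor_add_one ((N:ℝ) * x m)]
    _ = |(ξ' m : ℝ)| / N := by ring

lemma gfun_aestronglyMeasurable (d N : ℕ) (ξ' : Fin d → ℤ) (μ : Measure (Fin d → ℝ)) :
    AEStronglyMeasurable (fun x => ee ((gphase d N ξ' x : ℝ) : ℂ)) μ := by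
  refine (Measurable.stronglyMeasurable ?_).aestronglyMeasurable
  exact Complex.measurable_exp.comp
    (measurable_const.mul (Complex.measurable_ofReal.comp (gphase_measurable d N ξ')))

lemma mul_gfun_integrableOn_box (d N : ℕ) (ξ' : Fin d → ℤ) (F : (Fin d → ℝ) → ℂ)
    (hFbox : IntegrableOn F (boxAux d) volume) :
    IntegrableOn (fun x => F x * ee ((gphase d N ξ' x : ℝ) : ℂ)) (boxAux d) volume := by
  refine Integrable.mono' hFbox.norm ?_ (Filter.Eventually.of_forall fun x => ?_)
  · exact hFbox.aestronglyMeasurable.mul ((gfun_aestronglyMeasurable d N ξ' _))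
  · rw [norm_mul, ee_norm_aux, mul_one]

lemma dftAvg_repr (d N : ℕ) (ξ' : Fin d → ℤ) (hN : 0 < N) (F : (Fin d → ℝ) → ℂ)
    (hF : IntegrableOn F (cube d) volume) :
    dftAvg d N F ξ' = ∫ x in cube d, F x * ee ((gphase d N ξ' x : ℝ) : ℂ) := by
  have hFbox : IntegrableOn F (boxAux d) volume := by
    unfold IntegrableOn
    rw [← Measure.restrict_congr_set (cube_ae_box_aux d)]
    exact hF
  have hFg := mul_gfun_integrableOn_box d N ξ' F hFbox
  have step1 : ∫ x in cube d, F x * ee ((gphase d N ξ' x : ℝ) : ℂ)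
      = ∫ x in boxAux d, F x * ee ((gphase d N ξ' x : ℝ) : ℂ) :=
    setIntegral_congr_set (cube_ae_box_aux d)
  have step2 : ∫ x in boxAux d, F x * ee ((gphase d N ξ' x : ℝ) : ℂ)
      = ∑ I : Fin d → Fin N, ∫ x in cell d N I, F x * ee ((gphase d N ξ' x : ℝ) : ℂ) := by
    rw [← iUnion_cell_aux d N hN] at hFg ⊢
    rw [integral_iUnion (fun I => cell_measurableSet_aux d N I) cell_disjoint_aux hFg]
    exact tsum_fintype _
  have step3 : ∀ I : Fin d → Fin N, ∫ x in cell d N I, F x * ee ((gphase d N ξ' x : ℝ) : ℂ)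
      = (∫ x in cell d N I, F x) * ee (-(∑ m, (I m : ℂ) * (ξ' m : ℂ)) / N) := by
    intro I
    have hconst : ∀ x ∈ cell d N I,
        F x * ee ((gphase d N ξ' x : ℝ) : ℂ)
          = F x * ee (-(∑ m, (I m : ℂ) * (ξ' m : ℂ)) / N) := by
      intro x hx
      have hfl : ∀ m, (⌊(N : ℝ) * x m⌋ : ℝ) = ((I m : ℕ) : ℝ) := by
        intro m; exact_mod_cast congrArg (Int.cast : ℤ → ℝ) (floor_mem_cell_aux hx m)
      congr 2
      unfold gphase
      push_cast [hfl]
      ring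
    rw [setIntegral_congr_fun (cell_measurableSet_aux d N I) hconst, integral_mul_const]
  rw [step1, step2]
  unfold dftAvg cellAvg
  rw [Finset.mul_sum]
  refine Finset.sum_congr rfl fun I _ => ?_
  rw [step3 I]
  have hNd : ((N : ℂ) ^ d) ≠ 0 := by
    apply pow_ne_zero
    exact_mod_cast Nat.cast_ne_zero.2 hN.ne'
  field_simp

/-! ### The main theorem -/

/-- If `f_N ⇀ f_∞` weakly in `L²(Y;ℂ)`, then for each fixed frequency `ξ'` the
`ξ'`-th DFT coefficient of the cell averages of `f_N` converges to the `ξ'`-th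
Fourier coefficient of `f_∞`. -/
theorem dftAvg_tendsto_of_weakL2 (d : ℕ) (f : ℕ → (Fin d → ℝ) → ℂ)
    (flim : (Fin d → ℝ) → ℂ)
    (hfN : ∀ N, MemLp (f N) 2 (volume.restrict (cube d)))
    (hflim : MemLp flim 2 (volume.restrict (cube d)))
    (hweak : WeakL2 d f flim) (ξ' : Fin d → ℤ) :
    Tendsto (fun N => dftAvg d N (f N) ξ') atTop (nhds (fCoeff d flim ξ')) := by
  haveI hPM : IsProbabilityMeasure (volume.restrict (cube d)) :=
    ⟨by rw [Measure.restrict_apply_univ]; exact volume_cube_aux d⟩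
  -- uniform L¹ bound on the `f N` over the cube, via Banach–Steinhaus
  obtain ⟨C, hC1⟩ : ∃ C : ℝ, ∀ N, (∫ x in cube d, ‖f N x‖) ≤ C := by
    let Fl : ℕ → Lp ℂ 2 (volume.restrict (cube d)) := fun N => (hfN N).toLp (f N)
    have hpoint : ∀ v : Lp ℂ 2 (volume.restrict (cube d)),
        ∃ C, ∀ N, ‖(innerSL ℂ (Fl N)) v‖ ≤ C := by
      intro v
      have hconv := hweak v (Lp.memLp v)
      obtain ⟨C, hC⟩ := hconv.norm.bddAbove_range
      refine ⟨C, fun N => ?_⟩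
      have hkey : (innerSL ℂ (Fl N)) v
          = (starRingEnd ℂ) (∫ x in cube d, f N x * (starRingEnd ℂ) (v x)) := by
        rw [innerSL_apply_apply, MeasureTheory.L2.inner_def, ← integral_conj]
        apply integral_congr_ae
        filter_upwards [(hfN N).coeFn_toLp] with x hx
        rw [RCLike.inner_apply, hx]
        simp only [map_mul, Complex.conj_conj]
        ring
      rw [hkey, RCLike.norm_conj]
      exact hC ⟨N, rfl⟩
    let T : ℕ → (Lp ℂ 2 (volume.restrict (cube d)) →L[ℂ] ℂ) := fun N => innerSL ℂ (Fl N)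
    obtain ⟨C, hC⟩ := banach_steinhaus (g := T) hpoint
    refine ⟨C, fun N => ?_⟩
    have hFb : ‖Fl N‖ ≤ C := by rw [← innerSL_apply_norm (𝕜 := ℂ)]; exact hC N
    have h1 : (∫ x in cube d, ‖f N x‖)
        = (eLpNorm (f N) 1 (volume.restrict (cube d))).toReal := by
      rw [integral_norm_eq_lintegral_enorm (hfN N).aestronglyMeasurable,
        eLpNorm_one_eq_lintegral_enorm]
    have h2 : eLpNorm (f N) 1 (volume.restrict (cube d))
        ≤ eLpNorm (f N) 2 (volume.restrict (cube d)) :=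
      eLpNorm_le_eLpNorm_of_exponent_le (by norm_num) (hfN N).aestronglyMeasurable
    have h3 : ‖Fl N‖ = (eLpNorm (f N) 2 (volume.restrict (cube d))).toReal :=
      Lp.norm_toLp _ _
    calc (∫ x in cube d, ‖f N x‖)
        = (eLpNorm (f N) 1 (volume.restrict (cube d))).toReal := h1
      _ ≤ (eLpNorm (f N) 2 (volume.restrict (cube d))).toReal :=
          ENNReal.toReal_mono (hfN N).eLpNorm_ne_top h2
      _ = ‖Fl N‖ := h3.symm
      _ ≤ C := hFb
  -- notation
  have hK0 : (0:ℝ) ≤ ∑ m, |(ξ' m : ℝ)| := Finset.sum_nonneg fun m _ => abs_nonneg _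
  -- integrability facts
  have hint : ∀ N, Integrable (f N) (volume.restrict (cube d)) :=
    fun N => (hfN N).integrable (by norm_num)
  have hEcont : Continuous fun x : Fin d → ℝ => ee ((ephase d ξ' x : ℝ) : ℂ) :=
    Complex.continuous_exp.comp
      (continuous_const.mul (Complex.continuous_ofReal.comp (ephase_continuous d ξ')))
  have hintE : ∀ N, Integrable (fun x => f N x * ee ((ephase d ξ' x : ℝ) : ℂ))
      (volume.restrict (cube d)) := by
    intro N
    refine Integrable.mono' (hint N).norm
      ((hint N).aestronglyMeasurable.mul hEcont.aestronglyMeasurable)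
      (Filter.Eventually.of_forall fun x => ?_)
    rw [norm_mul, ee_norm_aux, mul_one]
  have hsub : ∀ N, Integrable
      (fun x => f N x * (ee ((gphase d N ξ' x : ℝ) : ℂ) - ee ((ephase d ξ' x : ℝ) : ℂ)))
      (volume.restrict (cube d)) := by
    intro N
    refine Integrable.mono' ((hint N).norm.const_mul 2)
      ((hint N).aestronglyMeasurable.mul
        (((gfun_aestronglyMeasurable d N ξ' _)).sub hEcont.aestronglyMeasurable))
      (Filter.Eventually.of_forall fun x => ?_)
    rw [norm_mul]
    calc ‖f N x‖ * ‖ee ((gphase d N ξ' x : ℝ) : ℂ) - ee ((ephase d ξ' x : ℝ) : ℂ)‖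
        ≤ ‖f N x‖ * 2 := by
          refine mul_le_mul_of_nonneg_left ?_ (norm_nonneg _)
          refine le_trans (norm_sub_le _ _) ?_
          rw [ee_norm_aux, ee_norm_aux]; norm_num
      _ = 2 * ‖f N x‖ := by ring
  -- splitting
  have hsplit : ∀ N, 0 < N → dftAvg d N (f N) ξ'
      = (∫ x in cube d, f N x * ee ((ephase d ξ' x : ℝ) : ℂ))
        + ∫ x in cube d,
            f N x * (ee ((gphase d N ξ' x : ℝ) : ℂ) - ee ((ephase d ξ' x : ℝ) : ℂ)) := by
    intro N hN
    rw [dftAvg_repr d N ξ' hN (f N) (hint N), ← integral_add (hintE N) (hsub N)]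
    refine integral_congr_ae (Filter.Eventually.of_forall fun x => ?_)
    ring
  -- the error term tends to zero
  have herrbound : ∀ N : ℕ, 0 < N →
      ‖∫ x in cube d,
          f N x * (ee ((gphase d N ξ' x : ℝ) : ℂ) - ee ((ephase d ξ' x : ℝ) : ℂ))‖
        ≤ (C * (2 * π * (∑ m, |(ξ' m : ℝ)|))) / N := by
    intro N hN
    have hNR : (0:ℝ) < N := by exact_mod_cast hN
    refine le_trans (norm_integral_le_integral_norm _) ?_
    have hpt : ∀ x : Fin d → ℝ,
        ‖f N x * (ee ((gphase d N ξ' x : ℝ) : ℂ) - ee ((ephase d ξ' x : ℝ) : ℂ))‖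
          ≤ ‖f N x‖ * (2 * π * ((∑ m, |(ξ' m : ℝ)|) / N)) := by
      intro x
      rw [norm_mul]
      refine mul_le_mul_of_nonneg_left ?_ (norm_nonneg _)
      refine le_trans (ee_lip_aux _ _) ?_
      refine mul_le_mul_of_nonneg_left ?_ (by positivity)
      exact phase_diff d N hN ξ' x
    calc ∫ x in cube d,
          ‖f N x * (ee ((gphase d N ξ' x : ℝ) : ℂ) - ee ((ephase d ξ' x : ℝ) : ℂ))‖
        ≤ ∫ x in cube d, ‖f N x‖ * (2 * π * ((∑ m, |(ξ' m : ℝ)|) / N)) :=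
          integral_mono (hsub N).norm ((hint N).norm.mul_const _) hpt
      _ = (∫ x in cube d, ‖f N x‖) * (2 * π * ((∑ m, |(ξ' m : ℝ)|) / N)) :=
          integral_mul_const _ _
      _ ≤ C * (2 * π * ((∑ m, |(ξ' m : ℝ)|) / N)) := by
          refine mul_le_mul_of_nonneg_right (hC1 N) ?_
          have : (0:ℝ) ≤ (∑ m, |(ξ' m : ℝ)|) / N := div_nonneg hK0 hNR.le
          positivity
      _ = (C * (2 * π * (∑ m, |(ξ' m : ℝ)|))) / N := by ring
  have herr0 : Tendsto (fun N => ∫ x in cube d,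
      f N x * (ee ((gphase d N ξ' x : ℝ) : ℂ) - ee ((ephase d ξ' x : ℝ) : ℂ)))
      atTop (nhds 0) := by
    apply squeeze_zero_norm'
      ?_ (tendsto_const_div_atTop_nhds_zero_nat (C * (2 * π * (∑ m, |(ξ' m : ℝ)|))))
    filter_upwards [eventually_gt_atTop 0] with N hN
    exact herrbound N hN
  -- the main term converges by weak convergence
  have hvmem : MemLp (fun x => (starRingEnd ℂ) (ee ((ephase d ξ' x : ℝ) : ℂ))) 2
      (volume.restrict (cube d)) := by
    refine MemLp.of_bound (continuous_star.comp hEcont).aestronglyMeasurable 1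
      (Filter.Eventually.of_forall fun x => ?_)
    rw [RCLike.norm_conj, ee_norm_aux]
  have hmain := hweak _ hvmem
  simp only [Complex.conj_conj] at hmain
  have hfc : fCoeff d flim ξ' = ∫ x in cube d, flim x * ee ((ephase d ξ' x : ℝ) : ℂ) := by
    unfold fCoeff
    refine integral_congr_ae (Filter.Eventually.of_forall fun x => ?_)
    congr 2
    unfold ephase
    push_cast
    ring
  rw [hfc]
  have hfinal := hmain.add herr0
  rw [add_zero] at hfinal
  refine hfinal.congr' ?_
  filter_upwards [eventually_gt_atTop 0] with N hN
  exact (hsplit N hN).symm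

end
end

section
/- (Quadratic error for effective coefficients.) In the setting of the FEM scheme, with u the exact corrector, u_N the finite element corrector, ε = ∇ˢu + E, and the energies E:C^eff:E = ⟨(∇ˢu+E):C:(∇ˢu+E)⟩ and E:C_N^{eff,F}:E = ⟨(∇ˢu_N+E):C_N:(∇ˢu_N+E)⟩, one has the algebraic decomposition E:(C_N^{eff,F} − C^eff):E = ⟨∇ˢ(u_N−u):C_N:∇ˢ(u_N−u)⟩ + 2⟨∇ˢ(u_N−u):C:(∇ˢu+E)⟩ + 2⟨∇ˢ(u_N−u):(C_N−C):(∇ˢu+E)⟩ + ⟨ε:(C_N−C):ε⟩, and the second term vanishes. Consequently, if ‖∇ˢ(u_N−u)‖_{L²} ≤ C N^{−1/2}√(E:E), ‖ε‖_{L^∞} ≤ C√(E:E), and ‖(C−C_N):ε‖_{L²} ≤ C N^{−1/2}√(E:E), then |E:(C^eff − C_N^{eff,F}):E| ≤ C N^{−1}(E:E). -/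
/-- Quadratic error for the effective coefficients of the FEM scheme.  Abstractly,
`X` is the space of `L²` strain fields, `G : H →ₗ X` the symmetric gradient,
`B, B_N : X →ₗ X` multiplication by the stiffness tensors `C, C_N` (with major
symmetry), `e ∈ X` the constant strain `E` (so `√(E:E) = ‖e‖`), `u` the exact
corrector, `u_N` the finite element corrector, and `ε = Gu + e`.  Then, writing
`δ = Gu_N − Gu`, one has the algebraic decomposition
`E:(C_N^{eff,F} − C^eff):E = ⟪δ, B_N δ⟫ + 2⟪δ, B ε⟫ + 2⟪δ, (B_N − B) ε⟫ + ⟪ε, (B_N − B) ε⟫`,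
the second term `2⟪δ, B ε⟫` vanishes, and under the stated `O(N^{-1/2})` bounds the
energy error satisfies `|E:(C^eff − C_N^{eff,F}):E| ≤ C·N⁻¹·‖e‖²`. -/
theorem effective_coefficient_quadratic_error (Λ'' C₁ : ℝ) (hΛ'' : 0 < Λ'') (hC₁ : 0 < C₁) :
    ∃ C : ℝ, 0 < C ∧
      ∀ (H X : Type) (_ : NormedAddCommGroup H) (_ : InnerProductSpace ℝ H)
        (_ : NormedAddCommGroup X) (_ : InnerProductSpace ℝ X),
        ∀ (G : H →ₗ[ℝ] X) (B BN : X →ₗ[ℝ] X) (e : X) (u uN : H) (N : ℕ), 0 < N →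
          (∀ s t : X, (inner ℝ s (B t) : ℝ) = (inner ℝ (B s) t : ℝ)) →
          (∀ s t : X, (inner ℝ s (BN t) : ℝ) = (inner ℝ (BN s) t : ℝ)) →
          (∀ s : X, ‖BN s‖ ≤ Λ'' * ‖s‖) →
          (∀ v : H, (inner ℝ (G v) (B (G u + e)) : ℝ) = 0) →
          ‖G uN - G u‖ ≤ C₁ * ((N : ℝ) ^ (-(1 / 2) : ℝ)) * ‖e‖ →
          ‖G u + e‖ ≤ C₁ * ‖e‖ →
          ‖(BN - B) (G u + e)‖ ≤ C₁ * ((N : ℝ) ^ (-(1 / 2) : ℝ)) * ‖e‖ →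
          |(inner ℝ (G u + e) ((BN - B) (G u + e)) : ℝ)| ≤ C₁ * (N : ℝ)⁻¹ * ‖e‖ ^ 2 →
          ((inner ℝ (G uN + e) (BN (G uN + e)) : ℝ) -
              (inner ℝ (G u + e) (B (G u + e)) : ℝ) =
            (inner ℝ (G uN - G u) (BN (G uN - G u)) : ℝ) +
              2 * (inner ℝ (G uN - G u) (B (G u + e)) : ℝ) +
              2 * (inner ℝ (G uN - G u) ((BN - B) (G u + e)) : ℝ) +
              (inner ℝ (G u + e) ((BN - B) (G u + e)) : ℝ)) ∧
          (inner ℝ (G uN - G u) (B (G u + e)) : ℝ) = 0 ∧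
          |(inner ℝ (G uN + e) (BN (G uN + e)) : ℝ) -
              (inner ℝ (G u + e) (B (G u + e)) : ℝ)| ≤ C * (N : ℝ)⁻¹ * ‖e‖ ^ 2 := by
  refine ⟨Λ'' * C₁ ^ 2 + 2 * C₁ ^ 2 + C₁, by positivity, ?_⟩
  intro H X _ _ _ _ G B BN e u uN N hN hB hBN hBNbd horth hδbd hεbd hdiffbd habs
  set δ : X := G uN - G u with hδdef
  set ε : X := G u + e with hεdef
  have hNpos : (0 : ℝ) < (N : ℝ) := by exact_mod_cast hN
  have hr : ((N : ℝ) ^ (-(1 / 2) : ℝ)) * ((N : ℝ) ^ (-(1 / 2) : ℝ)) = (N : ℝ)⁻¹ := by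
    rw [← Real.rpow_add hNpos]
    norm_num
    rw [Real.rpow_neg_one]
  -- orthogonality
  have horth' : (inner ℝ δ (B ε) : ℝ) = 0 := by
    have := horth (uN - u)
    rwa [map_sub] at this
  -- symmetry cross term
  have hcross : (inner ℝ ε (BN δ) : ℝ) = (inner ℝ δ (BN ε) : ℝ) := by
    rw [hBN ε δ, real_inner_comm]
  -- decomposition
  have hsplit : G uN + e = δ + ε := by
    simp only [hδdef, hεdef]; abel
  have hdec : (inner ℝ (G uN + e) (BN (G uN + e)) : ℝ) -
      (inner ℝ ε (B ε) : ℝ) =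
      (inner ℝ δ (BN δ) : ℝ) + 2 * (inner ℝ δ (B ε) : ℝ) +
        2 * (inner ℝ δ ((BN - B) ε) : ℝ) + (inner ℝ ε ((BN - B) ε) : ℝ) := by
    rw [hsplit]
    have h1 : (inner ℝ (δ + ε) (BN (δ + ε)) : ℝ) =
        (inner ℝ δ (BN δ) : ℝ) + (inner ℝ δ (BN ε) : ℝ) + (inner ℝ ε (BN δ) : ℝ) +
          (inner ℝ ε (BN ε) : ℝ) := by
      rw [map_add]
      simp [inner_add_left, inner_add_right]
      ring
    have h2 : (inner ℝ δ ((BN - B) ε) : ℝ) = (inner ℝ δ (BN ε) : ℝ) - (inner ℝ δ (B ε) : ℝ) := by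
      simp [LinearMap.sub_apply, inner_sub_right]
    have h3 : (inner ℝ ε ((BN - B) ε) : ℝ) = (inner ℝ ε (BN ε) : ℝ) - (inner ℝ ε (B ε) : ℝ) := by
      simp [LinearMap.sub_apply, inner_sub_right]
    rw [h1, h2, h3, hcross]; ring
  refine ⟨hdec, horth', ?_⟩
  rw [hdec, horth']
  have hδnn : (0:ℝ) ≤ ‖δ‖ := norm_nonneg _
  have henn : (0:ℝ) ≤ ‖e‖ := norm_nonneg _
  have hrpos : (0:ℝ) < (N : ℝ) ^ (-(1 / 2) : ℝ) := Real.rpow_pos_of_pos hNpos _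
  have hsq : ‖δ‖ * ‖δ‖ ≤ C₁ ^ 2 * (N : ℝ)⁻¹ * ‖e‖ ^ 2 := by
    calc ‖δ‖ * ‖δ‖
        ≤ (C₁ * ((N : ℝ) ^ (-(1 / 2) : ℝ)) * ‖e‖) * (C₁ * ((N : ℝ) ^ (-(1 / 2) : ℝ)) * ‖e‖) :=
          mul_le_mul hδbd hδbd hδnn (by positivity)
      _ = C₁ ^ 2 * (((N : ℝ) ^ (-(1 / 2) : ℝ)) * ((N : ℝ) ^ (-(1 / 2) : ℝ))) * ‖e‖ ^ 2 := by
          ring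
      _ = C₁ ^ 2 * (N : ℝ)⁻¹ * ‖e‖ ^ 2 := by rw [hr]
  have hpd : ‖δ‖ * ‖(BN - B) ε‖ ≤ C₁ ^ 2 * (N : ℝ)⁻¹ * ‖e‖ ^ 2 := by
    calc ‖δ‖ * ‖(BN - B) ε‖
        ≤ (C₁ * ((N : ℝ) ^ (-(1 / 2) : ℝ)) * ‖e‖) * (C₁ * ((N : ℝ) ^ (-(1 / 2) : ℝ)) * ‖e‖) :=
          mul_le_mul hδbd hdiffbd (norm_nonneg _) (by positivity)
      _ = C₁ ^ 2 * (((N : ℝ) ^ (-(1 / 2) : ℝ)) * ((N : ℝ) ^ (-(1 / 2) : ℝ))) * ‖e‖ ^ 2 := by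
          ring
      _ = C₁ ^ 2 * (N : ℝ)⁻¹ * ‖e‖ ^ 2 := by rw [hr]
  have hT1 : |(inner ℝ δ (BN δ) : ℝ)| ≤ Λ'' * C₁ ^ 2 * (N : ℝ)⁻¹ * ‖e‖ ^ 2 := by
    have h := abs_real_inner_le_norm δ (BN δ)
    have h2 := hBNbd δ
    calc |(inner ℝ δ (BN δ) : ℝ)| ≤ ‖δ‖ * ‖BN δ‖ := h
      _ ≤ ‖δ‖ * (Λ'' * ‖δ‖) := mul_le_mul_of_nonneg_left h2 hδnn
      _ = Λ'' * (‖δ‖ * ‖δ‖) := by ring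
      _ ≤ Λ'' * (C₁ ^ 2 * (N : ℝ)⁻¹ * ‖e‖ ^ 2) := by
          exact mul_le_mul_of_nonneg_left hsq hΛ''.le
      _ = Λ'' * C₁ ^ 2 * (N : ℝ)⁻¹ * ‖e‖ ^ 2 := by ring
  have hT3 : |2 * (inner ℝ δ ((BN - B) ε) : ℝ)| ≤ 2 * C₁ ^ 2 * (N : ℝ)⁻¹ * ‖e‖ ^ 2 := by
    have h := abs_real_inner_le_norm δ ((BN - B) ε)
    rw [abs_mul, abs_two]
    nlinarith [le_trans h hpd]
  calc |(inner ℝ δ (BN δ) : ℝ) + 2 * 0 + 2 * (inner ℝ δ ((BN - B) ε) : ℝ) +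
        (inner ℝ ε ((BN - B) ε) : ℝ)|
      ≤ |(inner ℝ δ (BN δ) : ℝ)| + |2 * (inner ℝ δ ((BN - B) ε) : ℝ)| +
        |(inner ℝ ε ((BN - B) ε) : ℝ)| := by
        rw [mul_zero, add_zero]
        exact (abs_add_le _ _).trans (add_le_add_left (abs_add_le _ _) _)
    _ ≤ Λ'' * C₁ ^ 2 * (N : ℝ)⁻¹ * ‖e‖ ^ 2 + 2 * C₁ ^ 2 * (N : ℝ)⁻¹ * ‖e‖ ^ 2 +
        C₁ * (N : ℝ)⁻¹ * ‖e‖ ^ 2 := by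
        exact add_le_add (add_le_add hT1 hT3) habs
    _ = (Λ'' * C₁ ^ 2 + 2 * C₁ ^ 2 + C₁) * (N : ℝ)⁻¹ * ‖e‖ ^ 2 := by ring
end
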